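/- With the vector potential A = (-b y, 0, 0) on ℝ³ (constant magnetic field b along z), the nonpolynomial function H₅ = −Π_x cos(b z / Π_z) − Π_y sin(b z / Π_z), defined on the open set where Π_z ≠ 0, Poisson-commutes with the Hamiltonian H = (1/2)(Π_x² + Π_y² + Π_z²), and moreover {H₅, H₁} = 0 and {H₅, H₂} = 0 where H₁ = Π_x + b y and H₂ = Π_y − b x. -/

import Mathlib

noncomputable section

/-- Partial derivative of a function on phase space ℝ⁶ in direction of the `i`-th coordinate. -/
def pd (F : (Fin 6 → ℝ) → ℝ) (i : Fin 6) (v : Fin 6 → ℝ) : ℝ :=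
  fderiv ℝ F v (Pi.single i 1)

/-- Canonical Poisson bracket on ℝ⁶ with coordinates (x,y,z,p_x,p_y,p_z). -/
def pb (F G : (Fin 6 → ℝ) → ℝ) (v : Fin 6 → ℝ) : ℝ :=
  ∑ k : Fin 3, (pd F ⟨k.1, by omega⟩ v * pd G ⟨k.1 + 3, by omega⟩ v -
    pd F ⟨k.1 + 3, by omega⟩ v * pd G ⟨k.1, by omega⟩ v)

def prj (i : Fin 6) : (Fin 6 → ℝ) →L[ℝ] ℝ := ContinuousLinearMap.proj i

set_option maxHeartbeats 2000000 in
theorem nonpolynomial_integral_constant_field (b : ℝ)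
    (H H₁ H₂ H₅ : (Fin 6 → ℝ) → ℝ)
    (hH : H = fun v => (1/2) * ((v 3 - b * v 1)^2 + (v 4)^2 + (v 5)^2))
    (hH₁ : H₁ = fun v => v 3)
    (hH₂ : H₂ = fun v => v 4 - b * v 0)
    (hH₅ : H₅ = fun v => -(v 3 - b * v 1) * Real.cos (b * v 2 / v 5)
      - v 4 * Real.sin (b * v 2 / v 5)) :
    ∀ v : Fin 6 → ℝ, v 5 ≠ 0 →
      pb H₅ H v = 0 ∧ pb H₅ H₁ v = 0 ∧ pb H₅ H₂ v = 0 := by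
  subst hH hH₁ hH₂ hH₅
  intro v hv
  simp only [pb, pd, Fin.sum_univ_three, div_eq_mul_inv, pow_two]
  have h0 : HasFDerivAt (fun w : Fin 6 → ℝ => w 0) (prj 0) v := hasFDerivAt_apply 0 v
  have h1 : HasFDerivAt (fun w : Fin 6 → ℝ => w 1) (prj 1) v := hasFDerivAt_apply 1 v
  have h2 : HasFDerivAt (fun w : Fin 6 → ℝ => w 2) (prj 2) v := hasFDerivAt_apply 2 v
  have h3 : HasFDerivAt (fun w : Fin 6 → ℝ => w 3) (prj 3) v := hasFDerivAt_apply 3 v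
  have h4 : HasFDerivAt (fun w : Fin 6 → ℝ => w 4) (prj 4) v := hasFDerivAt_apply 4 v
  have h5 : HasFDerivAt (fun w : Fin 6 → ℝ => w 5) (prj 5) v := hasFDerivAt_apply 5 v
  have hinv := (hasDerivAt_inv hv).comp_hasFDerivAt v h5
  have hg := (h2.const_mul b).mul hinv
  have hcos := (Real.hasDerivAt_cos (b * v 2 * (v 5)⁻¹)).comp_hasFDerivAt v hg
  have hsin := (Real.hasDerivAt_sin (b * v 2 * (v 5)⁻¹)).comp_hasFDerivAt v hg
  have hPx := h3.sub (h1.const_mul b)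
  have hH5 : HasFDerivAt (fun w : Fin 6 → ℝ =>
      -(w 3 - b * w 1) * Real.cos (b * w 2 * (w 5)⁻¹)
        - w 4 * Real.sin (b * w 2 * (w 5)⁻¹)) _ v := (hPx.neg.mul hcos).sub (h4.mul hsin)
  have hHd : HasFDerivAt (fun w : Fin 6 → ℝ =>
      1 * 2⁻¹ * ((w 3 - b * w 1) * (w 3 - b * w 1) + w 4 * w 4 + w 5 * w 5)) _ v :=
    (((hPx.mul hPx).add (h4.mul h4)).add (h5.mul h5)).const_mul (1 * 2⁻¹ : ℝ)
  have e5 := hH5.fderiv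
  have eH := hHd.fderiv
  have e1 := h3.fderiv
  have eH2 := (show HasFDerivAt (fun w : Fin 6 → ℝ => w 4 - b * w 0) _ v from
    h4.sub (h0.const_mul b)).fderiv
  rw [e5, eH, e1, eH2]
  simp only [ContinuousLinearMap.add_apply, ContinuousLinearMap.sub_apply,
    ContinuousLinearMap.smul_apply, ContinuousLinearMap.neg_apply, prj,
    ContinuousLinearMap.proj_apply, Pi.single_apply, Function.comp_apply, smul_eq_mul]
  simp (config := { decide := true }) only [Fin.ext_iff]
  norm_num
  field_simp
  ring
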